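/- If x = μ^k(z) with z ∈ {011011, 100100}, then x can be written as uvvuvv where u and v are nonempty binary words beginning with different letters. -/

import Mathlib

/-- The Thue-Morse morphism: μ(0)=01, μ(1)=10, with 0 = `false`, 1 = `true`. -/
def mu (w : List Bool) : List Bool := w.flatMap fun b => [b, !b]

lemma mu_append (a b : List Bool) : mu (a ++ b) = mu a ++ mu b := by
  simp [mu]

lemma mu_iter_append (k : ℕ) (a b : List Bool) :
    mu^[k] (a ++ b) = mu^[k] a ++ mu^[k] b := by
  induction k generalizing a b with
  | zero => rfl
  | succ n ih => simp [Function.iterate_succ_apply, mu_append, ih]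

lemma mu_iter_single (k : ℕ) (c : Bool) :
    mu^[k] [c] ≠ [] ∧ (mu^[k] [c]).head? = some c := by
  induction k with
  | zero => simp
  | succ n ih =>
    rw [Function.iterate_succ_apply']
    obtain ⟨hne, hh⟩ := ih
    obtain ⟨x, t, hxt⟩ := List.exists_cons_of_ne_nil hne
    rw [hxt] at hh
    simp at hh
    subst hh
    rw [hxt]
    simp [mu]

theorem uvvuvv_factorization (k : ℕ) (z : List Bool)
    (hz : z = [false, true, true, false, true, true] ∨
          z = [true, false, false, true, false, false]) :
    ∃ u v : List Bool, u ≠ [] ∧ v ≠ [] ∧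
      mu^[k] z = u ++ v ++ v ++ u ++ v ++ v ∧ u.head? ≠ v.head? := by
  obtain ⟨b, hb⟩ : ∃ b : Bool, z = [b, !b, !b, b, !b, !b] := by
    rcases hz with h | h
    · exact ⟨false, by simp [h]⟩
    · exact ⟨true, by simp [h]⟩
  refine ⟨mu^[k] [b], mu^[k] [!b], (mu_iter_single k b).1, (mu_iter_single k (!b)).1, ?_, ?_⟩
  · have : z = [b] ++ [!b] ++ [!b] ++ [b] ++ [!b] ++ [!b] := by simp [hb]
    rw [this]
    simp only [mu_iter_append]
  · rw [(mu_iter_single k b).2, (mu_iter_single k (!b)).2]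
    simp
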